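/- There exists a constant C ≥ 1 (depending only on α, c, φ) such that for all x,y with 0 < x ≤ y ≤ 5x: C⁻¹ x^{−1−α} ≤ q(x,y) ≤ C x^{−1−α} and C⁻¹ x^{−1−α} ≤ q(y,x) ≤ C x^{−1−α}. -/
import Mathlib


open MeasureTheory Set

/-- Two-sided estimate of the resurrection kernel on the near-diagonal region `x ≤ y ≤ 5x`:
`q(x,y) ≍ q(y,x) ≍ x^{-1-α}`. -/
theorem q_estimates_near_diagonal
    (α c : ℝ) (hα : α ∈ Set.Ioo (0 : ℝ) 2) (hc : 0 < c)
    (φ : ℝ → ℝ) (hφpos : ∀ t : ℝ, 0 < t → 0 < φ t)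
    (hnorm : ∫ t in Set.Ioi (0 : ℝ), φ t = 1)
    (q : ℝ → ℝ → ℝ)
    (hq : ∀ x y : ℝ, q x y
      = c * ∫ t in Set.Ioi (0 : ℝ), (x + y / t) ^ (-1 - α) * φ t / t) :
    ∃ C : ℝ, 1 ≤ C ∧ ∀ x y : ℝ, 0 < x → x ≤ y → y ≤ 5 * x →
      (C⁻¹ * x ^ (-1 - α) ≤ q x y ∧ q x y ≤ C * x ^ (-1 - α)
        ∧ C⁻¹ * x ^ (-1 - α) ≤ q y x ∧ q y x ≤ C * x ^ (-1 - α)) := by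
  obtain ⟨hα0, hα2⟩ := hα
  have hp : (-1 - α) < 0 := by linarith
  have hφint : IntegrableOn φ (Ioi (0:ℝ)) := by
    by_contra h
    rw [integral_undef h] at hnorm
    norm_num at hnorm
  set m := ∫ t in Ioo (1:ℝ) 2, φ t with hm_def
  have hsub : Ioo (1:ℝ) 2 ⊆ Ioi 0 := fun t ht => lt_trans one_pos ht.1
  have hφint12 : IntegrableOn φ (Ioo (1:ℝ) 2) := hφint.mono_set hsub
  have hm : 0 < m := by
    rw [hm_def, setIntegral_pos_iff_support_of_nonneg_ae
      ((ae_restrict_iff' measurableSet_Ioo).2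
        (Filter.Eventually.of_forall fun t ht => (hφpos t (hsub ht)).le)) hφint12]
    have hss : Ioo (1:ℝ) 2 ⊆ Function.support φ ∩ Ioo 1 2 := fun t ht =>
      ⟨(hφpos t (hsub ht)).ne', ht⟩
    calc (0:ENNReal) < volume (Ioo (1:ℝ) 2) := by simp
      _ ≤ _ := measure_mono hss
  have key : ∀ a b x : ℝ, 0 < x → x ≤ a → x ≤ b → a + b ≤ 6 * x →
      (c * ((6:ℝ) ^ (-1-α) * m / 2)) * x ^ (-1-α)
        ≤ c * ∫ t in Ioi (0:ℝ), (a + b / t) ^ (-1-α) * φ t / t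
      ∧ c * ∫ t in Ioi (0:ℝ), (a + b / t) ^ (-1-α) * φ t / t ≤ c * x ^ (-1-α) := by
    intro a b x hx hxa hxb hab
    have ha : 0 < a := lt_of_lt_of_le hx hxa
    have hb : 0 < b := lt_of_lt_of_le hx hxb
    have hxp : 0 < x ^ (-1-α) := Real.rpow_pos_of_pos hx _
    have hpt : ∀ t : ℝ, 0 < t → (a + b / t) ^ (-1-α) * φ t / t ≤ x ^ (-1-α) * φ t := by
      intro t ht
      have hbase : 0 < a + b / t := by positivity
      have h1 : (a + b / t) ^ (-1-α) / t ≤ x ^ (-1-α) := by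
        rcases le_total 1 t with h1t | h1t
        · have hx' : (a + b / t) ^ (-1-α) ≤ x ^ (-1-α) := by
            apply Real.rpow_le_rpow_of_nonpos hx _ hp.le
            have hb0 : 0 ≤ b / t := by positivity
            linarith
          calc (a + b / t) ^ (-1-α) / t ≤ (a + b / t) ^ (-1-α) :=
                div_le_self (Real.rpow_nonneg hbase.le _) h1t
            _ ≤ _ := hx'
        · have hxt : x / t ≤ a + b / t := by
            have h' : x / t ≤ b / t := by gcongr
            linarith
          have h2 : (a + b / t) ^ (-1-α) ≤ (x / t) ^ (-1-α) :=
            Real.rpow_le_rpow_of_nonpos (by positivity) hxt hp.le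
          have heq : (x / t) ^ (-1-α) / t = x ^ (-1-α) * t ^ α := by
            rw [Real.div_rpow hx.le ht.le, div_div, ← Real.rpow_add_one ht.ne',
              div_eq_mul_inv, ← Real.rpow_neg ht.le]
            congr 1
            ring
          have h3 : (x / t) ^ (-1-α) / t ≤ x ^ (-1-α) := by
            rw [heq]
            calc x ^ (-1-α) * t ^ α ≤ x ^ (-1-α) * 1 :=
                  mul_le_mul_of_nonneg_left (Real.rpow_le_one ht.le h1t hα0.le) hxp.le
              _ = x ^ (-1-α) := mul_one _
          calc (a + b / t) ^ (-1-α) / t ≤ (x / t) ^ (-1-α) / t := by gcongr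
            _ ≤ _ := h3
      calc (a + b / t) ^ (-1-α) * φ t / t = ((a + b / t) ^ (-1-α) / t) * φ t := by ring
        _ ≤ x ^ (-1-α) * φ t := mul_le_mul_of_nonneg_right h1 (hφpos t ht).le
    have hmeas : AEStronglyMeasurable (fun t : ℝ => (a + b / t) ^ (-1-α) * φ t / t)
        (volume.restrict (Ioi (0:ℝ))) := by
      have hcont : ContinuousOn (fun t : ℝ => (a + b / t) ^ (-1-α)) (Ioi 0) := by
        apply ContinuousOn.rpow_const
        · exact continuousOn_const.add (continuousOn_const.div continuousOn_id
            fun t ht => ne_of_gt ht)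
        · intro t ht
          have ht0 : (0:ℝ) < t := ht
          exact Or.inl (by positivity)
      simp only [div_eq_mul_inv]
      exact ((hcont.aestronglyMeasurable measurableSet_Ioi).mul
        hφint.aestronglyMeasurable).mul (Measurable.aestronglyMeasurable measurable_inv)
    have hint : IntegrableOn (fun t : ℝ => (a + b / t) ^ (-1-α) * φ t / t) (Ioi (0:ℝ)) := by
      apply Integrable.mono (hφint.const_mul (x ^ (-1-α))) hmeas
      refine (ae_restrict_iff' measurableSet_Ioi).2 (Filter.Eventually.of_forall fun t ht => ?_)
      have ht0 : (0:ℝ) < t := ht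
      have hbase : 0 < a + b / t := by positivity
      have hnn : 0 ≤ (a + b / t) ^ (-1-α) * φ t / t :=
        div_nonneg (mul_nonneg (Real.rpow_nonneg hbase.le _) (hφpos t ht).le) ht.le
      rw [Real.norm_of_nonneg hnn, Real.norm_of_nonneg (mul_nonneg hxp.le (hφpos t ht).le)]
      exact hpt t ht
    have hupper : ∫ t in Ioi (0:ℝ), (a + b / t) ^ (-1-α) * φ t / t ≤ x ^ (-1-α) := by
      calc ∫ t in Ioi (0:ℝ), (a + b / t) ^ (-1-α) * φ t / t
          ≤ ∫ t in Ioi (0:ℝ), x ^ (-1-α) * φ t :=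
            setIntegral_mono_on hint (hφint.const_mul _) measurableSet_Ioi fun t ht => hpt t ht
        _ = x ^ (-1-α) * ∫ t in Ioi (0:ℝ), φ t := integral_const_mul _ _
        _ = x ^ (-1-α) := by rw [hnorm, mul_one]
    have hlow_pt : ∀ t ∈ Ioo (1:ℝ) 2, ((6:ℝ) ^ (-1-α) * x ^ (-1-α) / 2) * φ t
        ≤ (a + b / t) ^ (-1-α) * φ t / t := by
      intro t ht
      have ht0 : 0 < t := hsub ht
      have hbase : 0 < a + b / t := by positivity
      have h6 : a + b / t ≤ 6 * x := by
        have hbt : b / t ≤ b := div_le_self hb.le ht.1.le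
        linarith
      have h1 : (6 * x) ^ (-1-α) ≤ (a + b / t) ^ (-1-α) :=
        Real.rpow_le_rpow_of_nonpos hbase h6 hp.le
      have h2 : (6:ℝ) ^ (-1-α) * x ^ (-1-α) = (6 * x) ^ (-1-α) :=
        (Real.mul_rpow (by norm_num) hx.le).symm
      have h3 : (6 * x) ^ (-1-α) / 2 ≤ (a + b / t) ^ (-1-α) / t :=
        div_le_div₀ (Real.rpow_nonneg hbase.le _) h1 ht0 ht.2.le
      calc ((6:ℝ) ^ (-1-α) * x ^ (-1-α) / 2) * φ t = ((6 * x) ^ (-1-α) / 2) * φ t := by rw [h2]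
        _ ≤ ((a + b / t) ^ (-1-α) / t) * φ t :=
            mul_le_mul_of_nonneg_right h3 (hφpos t ht0).le
        _ = (a + b / t) ^ (-1-α) * φ t / t := by ring
    have hnn_ae : 0 ≤ᵐ[volume.restrict (Ioi (0:ℝ))]
        (fun t : ℝ => (a + b / t) ^ (-1-α) * φ t / t) := by
      refine (ae_restrict_iff' measurableSet_Ioi).2 (Filter.Eventually.of_forall fun t ht => ?_)
      have ht0 : (0:ℝ) < t := ht
      have hbase : 0 < a + b / t := by positivity
      exact div_nonneg (mul_nonneg (Real.rpow_nonneg hbase.le _) (hφpos t ht).le) ht.le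
    have hlower : ((6:ℝ) ^ (-1-α) * x ^ (-1-α) / 2) * m
        ≤ ∫ t in Ioi (0:ℝ), (a + b / t) ^ (-1-α) * φ t / t := by
      calc ((6:ℝ) ^ (-1-α) * x ^ (-1-α) / 2) * m
          = ∫ t in Ioo (1:ℝ) 2, ((6:ℝ) ^ (-1-α) * x ^ (-1-α) / 2) * φ t :=
            (integral_const_mul _ _).symm
        _ ≤ ∫ t in Ioo (1:ℝ) 2, (a + b / t) ^ (-1-α) * φ t / t :=
            setIntegral_mono_on (hφint12.const_mul _) (hint.mono_set hsub)
              measurableSet_Ioo hlow_pt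
        _ ≤ ∫ t in Ioi (0:ℝ), (a + b / t) ^ (-1-α) * φ t / t :=
            setIntegral_mono_set hint hnn_ae (HasSubset.Subset.eventuallyLE hsub)
    constructor
    · calc (c * ((6:ℝ) ^ (-1-α) * m / 2)) * x ^ (-1-α)
          = c * (((6:ℝ) ^ (-1-α) * x ^ (-1-α) / 2) * m) := by ring
        _ ≤ c * ∫ t in Ioi (0:ℝ), (a + b / t) ^ (-1-α) * φ t / t :=
            mul_le_mul_of_nonneg_left hlower hc.le
    · exact mul_le_mul_of_nonneg_left hupper hc.le
  set L := c * ((6:ℝ) ^ (-1-α) * m / 2) with hL_def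
  have hL : 0 < L := by
    have h6 : 0 < (6:ℝ) ^ (-1-α) := Real.rpow_pos_of_pos (by norm_num) _
    positivity
  refine ⟨max 1 (max c L⁻¹), le_max_left _ _, fun x y hx hxy hy5 => ?_⟩
  set C := max 1 (max c L⁻¹) with hC_def
  have hC0 : 0 < C := lt_of_lt_of_le one_pos (le_max_left _ _)
  have hcC : c ≤ C := le_trans (le_max_left _ _) (le_max_right _ _)
  have hCinvL : C⁻¹ ≤ L := by
    have h1 : L⁻¹ ≤ C := le_trans (le_max_right _ _) (le_max_right _ _)
    calc C⁻¹ ≤ (L⁻¹)⁻¹ := by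
          apply inv_anti₀ (by positivity) h1
      _ = L := inv_inv L
  have hxp : 0 ≤ x ^ (-1-α) := (Real.rpow_pos_of_pos hx _).le
  have k1 := key x y x hx le_rfl hxy (by linarith)
  have k2 := key y x x hx hxy le_rfl (by linarith)
  have hsame : (-1 - α) = (-1-α) := rfl
  rw [hq x y, hq y x]
  rw [hsame]
  refine ⟨?_, ?_, ?_, ?_⟩
  · exact le_trans (mul_le_mul_of_nonneg_right hCinvL hxp) k1.1
  · exact le_trans k1.2 (mul_le_mul_of_nonneg_right hcC hxp)
  · exact le_trans (mul_le_mul_of_nonneg_right hCinvL hxp) k2.1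
  · exact le_trans k2.2 (mul_le_mul_of_nonneg_right hcC hxp)
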